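/- Let K be a field, (M, α) a log structure on K, R a valuation subring of K, and N := {m : M | α m ∈ R}, a submonoid of M. Then for every m ∈ M there exists u ∈ M such that u is invertible in M, α u ∈ R, and α (m * u) ∈ R; in particular every element of M can be written as n * u⁻¹ with n ∈ N and u an invertible element of M lying in N. (This is the surjectivity of N^gp → M^gp underlying the equality M_D^gp = M_η^gp in the proof that G_m^log is log proper, Proposition 2.5.) -/

import Mathlib

/-- Let `K` be a field, `(M, α)` a log structure on `K`, `R` a valuation
subring of `K`, and `N := {m : M | α m ∈ R}` the corresponding submonoid of `M`.  Then for
every `m ∈ M` there exists `u ∈ M` which is invertible in `M`, with `α u ∈ R` and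
`α (m * u) ∈ R`; in particular every element of `M` is of the form `n * u⁻¹` with
`n ∈ N` and `u` an invertible element of `M` lying in `N`.  (Surjectivity of
`N^gp → M^gp` in the proof that `G_m^log` is log proper.) -/
theorem log_structure_valuation_gp_surjective
    {K M : Type*} [Field K] [CommMonoid M] (α : M →* K)
    (hbij : Function.Bijective
      (fun m : {m : M // α m ≠ 0} => (⟨α m.1, m.2⟩ : {x : K // x ≠ 0})))
    (R : ValuationSubring K) :
    ∀ m : M, ∃ u : M, IsUnit u ∧ α u ∈ R ∧ α (m * u) ∈ R := by
  -- every m with α m ≠ 0 is a unit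
  have hunit : ∀ m : M, α m ≠ 0 → IsUnit m := by
    intro m hm
    obtain ⟨⟨m', hm'⟩, hmm'⟩ := hbij.2 ⟨(α m)⁻¹, inv_ne_zero hm⟩
    have hαm' : α m' = (α m)⁻¹ := congrArg Subtype.val hmm'
    have h1 : α (m * m') ≠ 0 := by
      simp [map_mul, hαm', mul_inv_cancel₀ hm]
    have : (⟨m * m', h1⟩ : {m : M // α m ≠ 0}) = ⟨1, by simp⟩ := by
      apply hbij.1
      ext
      simp [map_mul, hαm', mul_inv_cancel₀ hm]
    have hmm1 : m * m' = 1 := congrArg Subtype.val this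
    exact IsUnit.of_mul_eq_one m' hmm1
  intro m
  by_cases hm : α m = 0
  · exact ⟨1, isUnit_one, by simpa using R.one_mem, by simpa [map_mul, hm] using R.zero_mem⟩
  by_cases hR : α m ∈ R
  · exact ⟨1, isUnit_one, by simpa using R.one_mem, by simpa using hR⟩
  · obtain ⟨⟨u, hu⟩, huu⟩ := hbij.2 ⟨(α m)⁻¹, inv_ne_zero hm⟩
    have hαu : α u = (α m)⁻¹ := congrArg Subtype.val huu
    have hinv : (α m)⁻¹ ∈ R := (R.mem_or_inv_mem (α m)).resolve_left hR
    refine ⟨u, hunit u hu, by rw [hαu]; exact hinv, ?_⟩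
    rw [map_mul, hαu, mul_inv_cancel₀ hm]
    exact R.one_mem
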